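/- Combined conditioning of Theorem 1 for normalized wavelet fields: under the hypotheses of the previous two statements, if additionally the normalization a_j² 2^{−jζ} = cρ holds where ρ = (2π)^{−d} Σ_m ∫_{ℝ^d} |k|^{−ζ}|ψ̂^m(k)|² dk is finite and strictly positive, then there exist constants 0 < A ≤ B < ∞, independent of j, such that A ≤ λ_{φ̄_j}(k) ≤ B for all j ∈ ℤ and k ∈ [−π,π]^d; explicitly A = ρ⁻¹Γ(2π)^{−ζ} and B = (2^d−1)ρ⁻¹Γ'. -/

import Mathlib

/-- combined conditioning of Theorem 1 for the normalized wavelet fields: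
given the scale-wise lower and upper bounds and the normalization `a_j² 2^{−jζ} = cρ`,
there exist constants `0 < A ≤ B < ∞`, independent of `j`, with `A ≤ λ_{φ̄_j}(k) ≤ B`
for all `j ∈ ℤ` and `k ∈ [−π,π]^d`; explicitly `A = ρ⁻¹ Γ (2π)^{−ζ}` and
`B = (2^d − 1) ρ⁻¹ Γ'`. -/
theorem stmt14 (d : ℕ) (c ζ ρ Γ Γ' : ℝ)
    (hc : 0 < c) (hζ : 0 < ζ) (hρ : 0 < ρ) (hΓ : 0 < Γ) (hΓ' : 0 < Γ')
    (a : ℤ → ℝ) (ha : ∀ j, 0 < a j)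
    (lam : ℤ → EuclideanSpace ℝ (Fin d) → ℝ)
    -- lower bound from the coarse-grained field analysis (Statement 12):
    (hlow : ∀ (j : ℤ) (k : EuclideanSpace ℝ (Fin d)), (∀ t, |k t| ≤ Real.pi) →
      c * ((a j) ^ 2)⁻¹ * (2 : ℝ) ^ (((j : ℝ) - 1) * ζ) * Γ * Real.pi ^ (-ζ) ≤ lam j k)
    -- upper bound via the trace over the 2^d − 1 wavelet channels (Statement 13):
    (hup : ∀ (j : ℤ) (k : EuclideanSpace ℝ (Fin d)), (∀ t, |k t| ≤ Real.pi) →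
      lam j k ≤ ((2 : ℝ) ^ d - 1) * c * ((a j) ^ 2)⁻¹ * (2 : ℝ) ^ ((j : ℝ) * ζ) * Γ')
    -- normalization of the wavelet fields:
    (hnorm : ∀ j : ℤ, (a j) ^ 2 * (2 : ℝ) ^ (-(j : ℝ) * ζ) = c * ρ) :
    ∃ A B : ℝ,
      A = ρ⁻¹ * Γ * (2 * Real.pi) ^ (-ζ) ∧
      B = ((2 : ℝ) ^ d - 1) * ρ⁻¹ * Γ' ∧
      0 < A ∧ A ≤ B ∧
      ∀ (j : ℤ) (k : EuclideanSpace ℝ (Fin d)), (∀ t, |k t| ≤ Real.pi) →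
        A ≤ lam j k ∧ lam j k ≤ B := by

  have pi_pos := Real.pi_pos
  -- key: c * ((a j)^2)⁻¹ * 2^{jζ} = ρ⁻¹
  have key : ∀ j : ℤ, c * ((a j) ^ 2)⁻¹ * (2 : ℝ) ^ ((j : ℝ) * ζ) = ρ⁻¹ := by
    intro j
    have h := hnorm j
    have h2 : (2 : ℝ) ^ (-(j : ℝ) * ζ) = ((2 : ℝ) ^ ((j : ℝ) * ζ))⁻¹ := by
      rw [neg_mul, Real.rpow_neg (by norm_num)]
    rw [h2] at h
    have hp : (0:ℝ) < (2 : ℝ) ^ ((j : ℝ) * ζ) := Real.rpow_pos_of_pos (by norm_num) _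
    have haj : (0:ℝ) < (a j) ^ 2 := pow_pos (ha j) 2
    have ha2 : (a j) ^ 2 = c * ρ * (2 : ℝ) ^ ((j : ℝ) * ζ) := by
      field_simp at h
      linarith [h]
    rw [ha2]
    field_simp
  refine ⟨ρ⁻¹ * Γ * (2 * Real.pi) ^ (-ζ), ((2 : ℝ) ^ d - 1) * ρ⁻¹ * Γ', rfl, rfl, ?_, ?_, ?_⟩
  · positivity
  · -- A ≤ B via some k, j = 0
    have h0 : ∀ t, |(0 : EuclideanSpace ℝ (Fin d)) t| ≤ Real.pi := by
      intro t; simp [le_of_lt pi_pos]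
    have hl := hlow 0 0 h0
    have hu := hup 0 0 h0
    have hAeq : c * ((a (0:ℤ)) ^ 2)⁻¹ * (2 : ℝ) ^ ((((0:ℤ) : ℝ) - 1) * ζ) * Γ * Real.pi ^ (-ζ)
        = ρ⁻¹ * Γ * (2 * Real.pi) ^ (-ζ) := by
      have : (2 : ℝ) ^ ((((0:ℤ) : ℝ) - 1) * ζ) = (2 : ℝ) ^ (((0:ℤ) : ℝ) * ζ) * (2:ℝ) ^ (-ζ) := by
        rw [← Real.rpow_add (by norm_num)]; ring_nf
      rw [this, Real.mul_rpow (by norm_num) (le_of_lt pi_pos)]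
      linear_combination ((2:ℝ) ^ (-ζ) * Γ * Real.pi ^ (-ζ)) * key 0
    have hBeq : ((2 : ℝ) ^ d - 1) * c * ((a (0:ℤ)) ^ 2)⁻¹ * (2 : ℝ) ^ (((0:ℤ) : ℝ) * ζ) * Γ'
        = ((2 : ℝ) ^ d - 1) * ρ⁻¹ * Γ' := by
      linear_combination (((2:ℝ) ^ d - 1) * Γ') * key 0
    rw [hAeq] at hl; rw [hBeq] at hu
    linarith
  · intro j k hk
    have hl := hlow j k hk
    have hu := hup j k hk
    have hAeq : c * ((a j) ^ 2)⁻¹ * (2 : ℝ) ^ (((j : ℝ) - 1) * ζ) * Γ * Real.pi ^ (-ζ)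
        = ρ⁻¹ * Γ * (2 * Real.pi) ^ (-ζ) := by
      have h2 : (2 : ℝ) ^ (((j : ℝ) - 1) * ζ) = (2 : ℝ) ^ ((j : ℝ) * ζ) * (2:ℝ) ^ (-ζ) := by
        rw [← Real.rpow_add (by norm_num)]; ring_nf
      rw [h2, Real.mul_rpow (by norm_num) (le_of_lt pi_pos)]
      linear_combination ((2:ℝ) ^ (-ζ) * Γ * Real.pi ^ (-ζ)) * key j
    have hBeq : ((2 : ℝ) ^ d - 1) * c * ((a j) ^ 2)⁻¹ * (2 : ℝ) ^ ((j : ℝ) * ζ) * Γ'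
        = ((2 : ℝ) ^ d - 1) * ρ⁻¹ * Γ' := by
      linear_combination (((2:ℝ) ^ d - 1) * Γ') * key j
    rw [hAeq] at hl; rw [hBeq] at hu
    exact ⟨hl, hu⟩
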